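/- Let K ∈ ℝ^{n̄×n̄} and τ > 0 be such that (1−π_i)·I_{n̄} + τ·K is invertible for all i = 1,…,ℓ. Define P = I_ℓ ⊗ (I_{n̄} + τ·K) − Π_1 ⊗ I_{n̄} ∈ ℂ^{n̄ℓ×n̄ℓ} with Π_1 = diag(π_1,…,π_ℓ) (so P is block diagonal with i-th diagonal block (1−π_i)·I_{n̄} + τ·K, hence invertible), and define M = (F·e_1) ⊗ I_{n̄} ∈ ℂ^{n̄ℓ×n̄} and N = (F^{−T}·e_ℓ) ⊗ I_{n̄} ∈ ℂ^{n̄ℓ×n̄}, where F·e_1 and F^{−T}·e_ℓ are regarded as ℓ×1 matrices. Then N^T·P^{−1}·M = Σ_{i=1}^ℓ γ_i·((1−π_i)·I_{n̄} + τ·K)^{−1}. -/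
import Mathlib


open Matrix
open scoped Kronecker

lemma paradiag_aux_sum (ℓ : ℕ) [NeZero ℓ] (ω : ℂ)
    (hω : ω = Complex.exp (-(2 * Real.pi * Complex.I) / ℓ))
    (j k : Fin ℓ) :
    ∑ i : Fin ℓ, ω ^ ((j : ℕ) * (i : ℕ)) * (ω ^ ((i : ℕ) * (k : ℕ)))⁻¹
      = if j = k then (ℓ : ℂ) else 0 := by
  have hprim : IsPrimitiveRoot ω ℓ := by
    have h := Complex.isPrimitiveRoot_exp ℓ (NeZero.ne ℓ)
    rw [hω, neg_div, Complex.exp_neg]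
    exact h.inv
  have hω0 : ω ≠ 0 := by rw [hω]; exact Complex.exp_ne_zero _
  have hωℓ : ω ^ ℓ = 1 := hprim.pow_eq_one
  set x : ℂ := ω ^ (j : ℕ) * (ω ^ (k : ℕ))⁻¹ with hx
  have hterm : ∀ i : Fin ℓ,
      ω ^ ((j : ℕ) * (i : ℕ)) * (ω ^ ((i : ℕ) * (k : ℕ)))⁻¹ = x ^ (i : ℕ) := by
    intro i
    rw [hx, mul_pow, inv_pow, ← pow_mul, ← pow_mul, mul_comm (k : ℕ) (i : ℕ)]
  rw [Finset.sum_congr rfl (fun i _ => hterm i),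
    Fin.sum_univ_eq_sum_range (fun m => x ^ m)]
  by_cases h : j = k
  · subst h
    simp [hx, mul_inv_cancel₀ (pow_ne_zero _ hω0)]
  · have hx1 : x ≠ 1 := by
      intro hx1
      apply h
      have hpow : ω ^ (j : ℕ) = ω ^ (k : ℕ) := by
        have := mul_inv_eq_one₀ (pow_ne_zero (k : ℕ) hω0) |>.mp hx1
        exact this
      exact Fin.ext (hprim.pow_inj j.isLt k.isLt hpow)
    have hxℓ : x ^ ℓ = 1 := by
      rw [hx, mul_pow, inv_pow, ← pow_mul, ← pow_mul, mul_comm (j : ℕ) ℓ,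
        mul_comm (k : ℕ) ℓ, pow_mul, pow_mul, hωℓ, one_pow, one_pow, inv_one, mul_one]
    rw [geom_sum_eq hx1, hxℓ, sub_self, zero_div, if_neg h]

/-- `Nᵀ P⁻¹ M = ∑ i, γ i • ((1 - π i) I + τ K)⁻¹`. -/
theorem paradiag_NtPinvM
    (nbar ℓ : ℕ) [NeZero ℓ]
    (ω : ℂ) (hω : ω = Complex.exp (-(2 * Real.pi * Complex.I) / ℓ))
    (π : Fin ℓ → ℂ) (hπ : ∀ i, π i = ω ^ (i : ℕ))
    (γ : Fin ℓ → ℂ) (hγ : ∀ i, γ i = π i / ℓ)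
    (F : Matrix (Fin ℓ) (Fin ℓ) ℂ)
    (hF : ∀ j k : Fin ℓ, F j k = ω ^ ((j : ℕ) * (k : ℕ)))
    (eL : Fin ℓ) (heL : (eL : ℕ) = ℓ - 1)
    (K : Matrix (Fin nbar) (Fin nbar) ℝ) (τ : ℝ) (hτ : 0 < τ)
    (Kc : Matrix (Fin nbar) (Fin nbar) ℂ) (hKc : Kc = K.map Complex.ofReal)
    (A : Fin ℓ → Matrix (Fin nbar) (Fin nbar) ℂ)
    (hA : ∀ i, A i = (1 - π i) • (1 : Matrix (Fin nbar) (Fin nbar) ℂ) + (τ : ℂ) • Kc)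
    (hAu : ∀ i, IsUnit (A i))
    (P : Matrix (Fin ℓ × Fin nbar) (Fin ℓ × Fin nbar) ℂ)
    (hP : P = (1 : Matrix (Fin ℓ) (Fin ℓ) ℂ) ⊗ₖ
        ((1 : Matrix (Fin nbar) (Fin nbar) ℂ) + (τ : ℂ) • Kc) -
        (Matrix.diagonal π) ⊗ₖ (1 : Matrix (Fin nbar) (Fin nbar) ℂ))
    (M N : Matrix (Fin ℓ × Fin nbar) (Fin nbar) ℂ)
    (hM : ∀ (p : Fin ℓ × Fin nbar) (b : Fin nbar),
      M p b = (F *ᵥ Pi.single (0 : Fin ℓ) 1) p.1 * (1 : Matrix (Fin nbar) (Fin nbar) ℂ) p.2 b)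
    (hN : ∀ (p : Fin ℓ × Fin nbar) (b : Fin nbar),
      N p b = ((F⁻¹)ᵀ *ᵥ Pi.single eL 1) p.1 * (1 : Matrix (Fin nbar) (Fin nbar) ℂ) p.2 b) :
    Nᵀ * P⁻¹ * M = ∑ i, γ i • (A i)⁻¹ := by
  have hℓc : (ℓ : ℂ) ≠ 0 := Nat.cast_ne_zero.mpr (NeZero.ne ℓ)
  have hω0 : ω ≠ 0 := by rw [hω]; exact Complex.exp_ne_zero _
  have hprim : IsPrimitiveRoot ω ℓ := by
    have h := Complex.isPrimitiveRoot_exp ℓ (NeZero.ne ℓ)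
    rw [hω, neg_div, Complex.exp_neg]
    exact h.inv
  have hωℓ : ω ^ ℓ = 1 := hprim.pow_eq_one
  -- the inverse of F
  have hFinv : F⁻¹ = Matrix.of (fun j k : Fin ℓ => (ω ^ ((j : ℕ) * (k : ℕ)))⁻¹ / ℓ) := by
    apply Matrix.inv_eq_right_inv
    ext j k
    have : (F * Matrix.of (fun j k : Fin ℓ => (ω ^ ((j : ℕ) * (k : ℕ)))⁻¹ / ℓ)) j k
        = (∑ i : Fin ℓ, ω ^ ((j : ℕ) * (i : ℕ)) * (ω ^ ((i : ℕ) * (k : ℕ)))⁻¹) / ℓ := by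
      rw [Matrix.mul_apply, Finset.sum_div]
      refine Finset.sum_congr rfl fun i _ => ?_
      rw [hF, Matrix.of_apply, mul_div_assoc]
    rw [this, paradiag_aux_sum ℓ ω hω j k]
    by_cases h : j = k <;> simp [h, Matrix.one_apply, hℓc]
  -- the vectors
  have hv : ∀ i, ((F⁻¹)ᵀ *ᵥ Pi.single eL 1) i = γ i := by
    intro i
    have h1 : ((F⁻¹)ᵀ *ᵥ Pi.single eL 1) i = F⁻¹ eL i := by
      simp [Matrix.mulVec, dotProduct, Pi.single_apply, mul_ite]
    rw [h1, hFinv]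
    have h2 : ω ^ ((eL : ℕ) * (i : ℕ)) * ω ^ (i : ℕ) = 1 := by
      rw [← pow_add]
      have h3 : (eL : ℕ) * (i : ℕ) + (i : ℕ) = ℓ * (i : ℕ) := by
        rw [heL]
        have h4 : 1 ≤ ℓ := Nat.one_le_iff_ne_zero.mpr (NeZero.ne ℓ)
        rw [Nat.sub_mul, one_mul]
        have h5 : (i : ℕ) ≤ ℓ * (i : ℕ) := Nat.le_mul_of_pos_left _ h4
        omega
      rw [h3, pow_mul, hωℓ, one_pow]
    have h6 : (ω ^ ((eL : ℕ) * (i : ℕ)))⁻¹ = ω ^ (i : ℕ) :=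
      inv_eq_of_mul_eq_one_right h2
    rw [Matrix.of_apply, h6, hγ, hπ]
  have hw : ∀ i, (F *ᵥ Pi.single (0 : Fin ℓ) 1) i = 1 := by
    intro i
    simp [Matrix.mulVec, dotProduct, Pi.single_apply, mul_ite, hF]
  -- P as an explicit block diagonal matrix
  have hPA : P = Matrix.of (fun p q : Fin ℓ × Fin nbar =>
      if p.1 = q.1 then A p.1 p.2 q.2 else 0) := by
    rw [hP]
    ext ⟨i, a⟩ ⟨j, b⟩
    simp only [Matrix.sub_apply, Matrix.kroneckerMap_apply, Matrix.of_apply,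
      Matrix.diagonal_apply, Matrix.one_apply, hA, Matrix.add_apply, Matrix.smul_apply,
      smul_eq_mul]
    by_cases h : i = j
    · subst h
      by_cases h2 : a = b <;> simp [h2, Matrix.one_apply] <;> ring
    · simp [h]
  -- the inverse of P
  set Q : Matrix (Fin ℓ × Fin nbar) (Fin ℓ × Fin nbar) ℂ :=
    Matrix.of (fun p q : Fin ℓ × Fin nbar =>
      if p.1 = q.1 then (A p.1)⁻¹ p.2 q.2 else 0) with hQ
  have hAinv : ∀ i, A i * (A i)⁻¹ = 1 := fun i =>
    Matrix.mul_nonsing_inv _ ((Matrix.isUnit_iff_isUnit_det _).mp (hAu i))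
  have hPinv : P⁻¹ = Q := by
    apply Matrix.inv_eq_right_inv
    ext ⟨i, a⟩ ⟨j, b⟩
    rw [Matrix.mul_apply, hPA, hQ]
    rw [Fintype.sum_prod_type]
    simp only [Matrix.of_apply, ite_mul, zero_mul, mul_ite, mul_zero]
    rw [Finset.sum_eq_single i]
    · by_cases h : i = j
      · subst h
        simp only [if_true, ite_true]
        rw [← Matrix.mul_apply, hAinv i]
        simp [Matrix.one_apply, Prod.ext_iff]
      · simp [h, Matrix.one_apply, Prod.ext_iff]
    · intro k _ hk
      simp [Ne.symm hk]
    · simp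
  rw [hPinv]
  ext a b
  rw [Matrix.mul_apply, Matrix.sum_apply]
  have hNQ : ∀ q : Fin ℓ × Fin nbar, (Nᵀ * Q) a q = γ q.1 * (A q.1)⁻¹ a q.2 := by
    intro ⟨j, d⟩
    rw [Matrix.mul_apply, Fintype.sum_prod_type]
    have hterm : ∀ i : Fin ℓ, ∀ c : Fin nbar,
        Nᵀ a (i, c) * Q (i, c) (j, d)
          = (if c = a then (1 : ℂ) else 0) * (if i = j then γ i * (A i)⁻¹ c d else 0) := by
      intro i c
      rw [Matrix.transpose_apply, hN, hQ]
      simp only [Matrix.of_apply, hv i, Matrix.one_apply]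
      by_cases h : i = j <;> by_cases h2 : c = a <;> simp [h, h2] <;> ring
    simp only [hterm]
    rw [Finset.sum_eq_single j]
    · simp
    · intro k _ hk
      simp [hk]
    · simp
  have hterm2 : ∀ q : Fin ℓ × Fin nbar,
      (Nᵀ * Q) a q * M q b
        = (if q.2 = b then (1 : ℂ) else 0) * (γ q.1 * (A q.1)⁻¹ a q.2) := by
    intro ⟨j, d⟩
    rw [hNQ, hM]
    simp only [hw j, one_mul, Matrix.one_apply]
    by_cases h : d = b <;> simp [h] <;> ring
  simp only [hterm2]
  rw [Fintype.sum_prod_type]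
  refine Finset.sum_congr rfl fun i _ => ?_
  rw [Finset.sum_eq_single b]
  · simp
  · intro c _ hc
    simp [hc]
  · simp
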